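/- Let f, g : (0,∞) → ℝ be convex with f(1) = g(1) = 0. Suppose g(t)/t → ∞ as t → ∞, and let γ₀ := limsup_{t→∞} g(t)/f(t), the limit superior taken in the extended reals. Then for every real γ < γ₀ the supremum of D_g(Q,P) − γ·D_f(Q,P) over two-point distributions is infinite: for every M ∈ ℝ there exist p, q ∈ (0,1) such that, with P = (p, 1−p) and Q = (q, 1−q), one has D_g(Q,P) − γ·D_f(Q,P) > M. -/

import Mathlib

open Finset Filter Topology

/-- The `f`-divergence of the two-point distributions `P = (p, 1-p)` and `Q = (q, 1-q)`. -/
noncomputable def fDiv2 (f : ℝ → ℝ) (p q : ℝ) : ℝ :=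
  q * f (p / q) + (1 - q) * f ((1 - p) / (1 - q))

/-- Linear lower bound for a convex function with `f 1 = 0`. -/
lemma convex_lin_lb {f : ℝ → ℝ} (hf : ConvexOn ℝ (Set.Ioi 0) f) (hf1 : f 1 = 0) :
    ∀ t : ℝ, 2 ≤ t → (t - 1) * f 2 ≤ f t := by
  intro t ht
  have ht1 : (1:ℝ) < t := by linarith
  have h1 : (1:ℝ) ∈ Set.Ioi (0:ℝ) := by norm_num
  have h2 : t ∈ Set.Ioi (0:ℝ) := by simp; linarith
  have hne : t - 1 ≠ 0 := by intro h; linarith [h]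
  have ha : (0:ℝ) ≤ (t-2)/(t-1) := div_nonneg (by linarith) (by linarith)
  have hb : (0:ℝ) ≤ 1/(t-1) := div_nonneg (by norm_num) (by linarith)
  have hab : (t-2)/(t-1) + 1/(t-1) = 1 := by
    rw [← add_div, div_eq_one_iff_eq hne]; ring
  have key := hf.2 h1 h2 ha hb hab
  simp only [smul_eq_mul] at key
  have hcomb : (t-2)/(t-1) * (1:ℝ) + (1/(t-1)) * t = 2 := by
    field_simp
    ring
  rw [hcomb, hf1, mul_zero, zero_add] at key
  have h3 : (t-1) * f 2 ≤ (t-1) * (1/(t-1) * f t) :=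
    mul_le_mul_of_nonneg_left key (by linarith)
  have h4 : (t-1) * (1/(t-1) * f t) = f t := by
    field_simp
  linarith

/-- Bounds on `[1/2, 1]` for a convex function with `f 1 = 0`. -/
lemma convex_mid_bound {f : ℝ → ℝ} (hf : ConvexOn ℝ (Set.Ioi 0) f) (hf1 : f 1 = 0) :
    ∀ s : ℝ, s ∈ Set.Icc (1/2 : ℝ) 1 → -|f 2| ≤ f s ∧ f s ≤ |f (1/2)| := by
  intro s hs
  obtain ⟨hs1, hs2⟩ := hs
  have hsmem : s ∈ Set.Ioi (0:ℝ) := by simp; linarith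
  constructor
  · -- lower bound using convexity at 1 between s and 2
    have h2 : (2:ℝ) ∈ Set.Ioi (0:ℝ) := by norm_num
    have hden : (0:ℝ) < 2 - s := by linarith
    have hdne : (2:ℝ) - s ≠ 0 := ne_of_gt hden
    have ha : (0:ℝ) ≤ 1/(2-s) := div_nonneg (by norm_num) hden.le
    have hb : (0:ℝ) ≤ (1-s)/(2-s) := div_nonneg (by linarith) hden.le
    have hab : 1/(2-s) + (1-s)/(2-s) = 1 := by
      rw [← add_div, div_eq_one_iff_eq hdne]; ring
    have key := hf.2 hsmem h2 ha hb hab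
    simp only [smul_eq_mul] at key
    have hcomb : (1/(2-s)) * s + ((1-s)/(2-s)) * (2:ℝ) = 1 := by
      field_simp
      ring
    rw [hcomb, hf1] at key
    have key2 : 0 ≤ f s + (1-s) * f 2 := by
      have h := mul_le_mul_of_nonneg_left key hden.le
      have heq : (2-s) * (1/(2-s) * f s + (1-s)/(2-s) * f 2) = f s + (1-s) * f 2 := by
        field_simp
      rw [mul_zero, heq] at h
      exact h
    nlinarith [mul_nonneg (by linarith : (0:ℝ) ≤ 1 - s)
        (by linarith [le_abs_self (f 2)] : (0:ℝ) ≤ |f 2| - f 2),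
      mul_nonneg (by linarith : (0:ℝ) ≤ s) (abs_nonneg (f 2))]
  · -- upper bound via le_on_segment
    have hhalf : (1/2 : ℝ) ∈ Set.Ioi (0:ℝ) := by norm_num
    have hone : (1:ℝ) ∈ Set.Ioi (0:ℝ) := by norm_num
    have hseg : s ∈ segment ℝ (1/2 : ℝ) 1 := by
      rw [segment_eq_Icc (by norm_num : (1/2:ℝ) ≤ 1)]
      exact ⟨hs1, hs2⟩
    have h := hf.le_on_segment hhalf hone hseg
    rw [hf1] at h
    calc f s ≤ max (f (1/2)) 0 := h
      _ ≤ |f (1/2)| := max_le (le_abs_self _) (abs_nonneg _)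

theorem sup_g_sub_gamma_f_reversed_eq_top_of_limsup_atTop (f g : ℝ → ℝ)
    (hf : ConvexOn ℝ (Set.Ioi 0) f) (hg : ConvexOn ℝ (Set.Ioi 0) g)
    (hf1 : f 1 = 0) (hg1 : g 1 = 0)
    (hgs : Tendsto (fun t => g t / t) atTop atTop)
    (γ : ℝ)
    (hγ : (γ : EReal) < limsup (fun t => ((g t / f t : ℝ) : EReal)) atTop) :
    ∀ M : ℝ, ∃ p q : ℝ, p ∈ Set.Ioo (0:ℝ) 1 ∧ q ∈ Set.Ioo (0:ℝ) 1 ∧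
      fDiv2 g q p - γ * fDiv2 f q p > M := by
  -- Key step: for every R there is t ≥ 2 with g t - γ * f t ≥ R * t
  have key : ∀ R : ℝ, ∃ t : ℝ, 2 ≤ t ∧ R * t ≤ g t - γ * f t := by
    intro R
    rcases le_or_gt γ 0 with hγ0 | hγ0
    · -- γ ≤ 0 : use linear lower bound on f
      obtain ⟨T, hT⟩ := eventually_atTop.mp (hgs.eventually_ge_atTop (R + |γ| * |f 2|))
      refine ⟨max 2 T, le_max_left _ _, ?_⟩
      have ht2 : 2 ≤ max 2 T := le_max_left _ _
      have htpos : (0:ℝ) < max 2 T := by linarith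
      have hgt : (R + |γ| * |f 2|) * max 2 T ≤ g (max 2 T) := by
        have h := hT (max 2 T) (le_max_right _ _)
        have h2 : (R + |γ| * |f 2|) * max 2 T ≤ (g (max 2 T) / max 2 T) * max 2 T :=
          mul_le_mul_of_nonneg_right h htpos.le
        have h3 : (g (max 2 T) / max 2 T) * max 2 T = g (max 2 T) := by
          field_simp
        linarith
      have hflb : -|f 2| * max 2 T ≤ f (max 2 T) := by
        have h1 := convex_lin_lb hf hf1 (max 2 T) ht2
        nlinarith [abs_nonneg (f 2), le_abs_self (f 2), neg_abs_le (f 2)]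
      have hγf : γ * f (max 2 T) ≤ |γ| * |f 2| * max 2 T := by
        rw [abs_of_nonpos hγ0]
        nlinarith [mul_nonneg (neg_nonneg.mpr hγ0)
          (by linarith : (0:ℝ) ≤ f (max 2 T) + |f 2| * max 2 T)]
      nlinarith [hgt, hγf]
    · -- γ > 0 : use the limsup hypothesis
      obtain ⟨c, hc1, hc2⟩ := exists_between hγ
      have hcbot : c ≠ ⊥ := fun h => by rw [h] at hc1; exact (not_lt.mpr bot_le) hc1
      have hctop : c ≠ ⊤ := fun h => by rw [h] at hc2; exact (not_lt.mpr le_top) hc2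
      obtain ⟨γ', rfl⟩ : ∃ γ' : ℝ, (γ' : EReal) = c := ⟨c.toReal, EReal.coe_toReal hctop hcbot⟩
      have hγγ' : γ < γ' := EReal.coe_lt_coe_iff.mp hc1
      have hγ'pos : 0 < γ' := lt_trans hγ0 hγγ'
      have hfreq : ∃ᶠ t in atTop, (γ' : EReal) < ((g t / f t : ℝ) : EReal) :=
        frequently_lt_of_lt_limsup (by isBoundedDefault) hc2
      have hεpos : 0 < 1 - γ / γ' := by
        have : γ / γ' < 1 := (div_lt_one hγ'pos).mpr hγγ'
        linarith
      have hev : ∀ᶠ t in atTop, 2 ≤ t ∧ max 1 (R / (1 - γ / γ')) ≤ g t / t := by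
        filter_upwards [eventually_ge_atTop (2:ℝ),
          hgs.eventually_ge_atTop (max 1 (R / (1 - γ / γ')))] with t h1 h2
        exact ⟨h1, h2⟩
      obtain ⟨t, hft, ht2, hgr⟩ := (hfreq.and_eventually hev).exists
      refine ⟨t, ht2, ?_⟩
      have htpos : (0:ℝ) < t := by linarith
      have hgt : max 1 (R / (1 - γ / γ')) * t ≤ g t := by
        have h2 : max 1 (R / (1 - γ / γ')) * t ≤ (g t / t) * t :=
          mul_le_mul_of_nonneg_right hgr htpos.le
        have h3 : (g t / t) * t = g t := by field_simp
        linarith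
      have hgpos : 0 < g t := by
        have h1 : (1:ℝ) * t ≤ g t :=
          le_trans (mul_le_mul_of_nonneg_right (le_max_left _ _) htpos.le) hgt
        linarith
      have hratio : γ' < g t / f t := EReal.coe_lt_coe_iff.mp hft
      have hfpos : 0 < f t := by
        by_contra h
        push_neg at h
        rcases lt_or_eq_of_le h with h | h
        · have : g t / f t < 0 := div_neg_of_pos_of_neg hgpos h
          linarith
        · rw [h, div_zero] at hratio
          linarith
      have hgf : γ' * f t < g t := (lt_div_iff₀ hfpos).mp hratio
      have hγf : γ * f t < (γ / γ') * g t := by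
        have h1 : γ * f t = (γ / γ') * (γ' * f t) := by
          field_simp
        rw [h1]
        exact mul_lt_mul_of_pos_left hgf (by positivity)
      have hεg : (1 - γ / γ') * g t ≤ g t - γ * f t := by nlinarith
      have hRt : R * t ≤ (1 - γ / γ') * g t := by
        have h1 : (R / (1 - γ / γ')) * t ≤ g t :=
          le_trans (mul_le_mul_of_nonneg_right (le_max_right _ _) htpos.le) hgt
        have h2 : (1 - γ / γ') * ((R / (1 - γ / γ')) * t) ≤ (1 - γ / γ') * g t :=
          mul_le_mul_of_nonneg_left h1 hεpos.le
        have h3 : (1 - γ / γ') * ((R / (1 - γ / γ')) * t) = R * t := by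
          rw [← mul_assoc, mul_comm (1 - γ / γ') (R / (1 - γ / γ')),
            div_mul_cancel₀ R (ne_of_gt hεpos)]
        linarith
      linarith
  intro M
  obtain ⟨Bf, hBfnn, hBf1, hBf2⟩ : ∃ Bf : ℝ, 0 ≤ Bf ∧ |f (1/2)| ≤ Bf ∧ |f 2| ≤ Bf :=
    ⟨max |f (1/2)| |f 2|, le_trans (abs_nonneg _) (le_max_left _ _),
      le_max_left _ _, le_max_right _ _⟩
  obtain ⟨Bg, hBgnn, hBg1, hBg2⟩ : ∃ Bg : ℝ, 0 ≤ Bg ∧ |g (1/2)| ≤ Bg ∧ |g 2| ≤ Bg :=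
    ⟨max |g (1/2)| |g 2|, le_trans (abs_nonneg _) (le_max_left _ _),
      le_max_left _ _, le_max_right _ _⟩
  have hBnn : 0 ≤ Bg + |γ| * Bf := by positivity
  obtain ⟨t, ht2, hRt⟩ := key (2 * (M + (Bg + |γ| * Bf)) + 2)
  have htpos : (0:ℝ) < t := by linarith
  refine ⟨1 / (2 * t), 1/2, ⟨by positivity, ?_⟩, ⟨by norm_num, by norm_num⟩, ?_⟩
  · rw [div_lt_one (by positivity)]
    linarith
  · have hple : 1 / (2 * t) ≤ 1/4 := by
      rw [div_le_div_iff₀ (by positivity) (by norm_num)]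
      linarith
    have hppos : (0:ℝ) < 1 / (2 * t) := by positivity
    have hqp : (1/2 : ℝ) / (1 / (2 * t)) = t := by
      field_simp
    have h1p : (0:ℝ) < 1 - 1 / (2 * t) := by linarith
    have hsmem : (1 - 1/2) / (1 - 1 / (2 * t)) ∈ Set.Icc (1/2 : ℝ) 1 := by
      constructor
      · rw [le_div_iff₀ h1p]; linarith
      · rw [div_le_one h1p]; linarith
    obtain ⟨hfl, hfu⟩ := convex_mid_bound hf hf1 _ hsmem
    obtain ⟨hgl, hgu⟩ := convex_mid_bound hg hg1 _ hsmem
    -- abbreviate s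
    set s : ℝ := (1 - 1/2) / (1 - 1 / (2 * t)) with hs
    have hfsb : |f s| ≤ Bf := abs_le.mpr ⟨by linarith, by linarith⟩
    have hgsl : -Bg ≤ g s := by
      have := neg_abs_le (g s)
      have : -|g 2| ≤ g s := hgl
      linarith
    have hγfs : γ * f s ≤ |γ| * Bf := by
      have h1 : |γ * f s| ≤ |γ| * Bf := by
        rw [abs_mul]
        exact mul_le_mul_of_nonneg_left hfsb (abs_nonneg _)
      linarith [le_abs_self (γ * f s)]
    have hmid : -(Bg + |γ| * Bf) ≤ g s - γ * f s := by linarith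
    have hexp : fDiv2 g (1/2) (1 / (2 * t)) - γ * fDiv2 f (1/2) (1 / (2 * t))
        = (1 / (2 * t)) * (g t - γ * f t) + (1 - 1 / (2 * t)) * (g s - γ * f s) := by
      simp only [fDiv2, hs, hqp]
      ring
    rw [gt_iff_lt, hexp]
    have h1 : M + (Bg + |γ| * Bf) + 1 ≤ (1 / (2 * t)) * (g t - γ * f t) := by
      have h2 : (1 / (2 * t)) * ((2 * (M + (Bg + |γ| * Bf)) + 2) * t)
          ≤ (1 / (2 * t)) * (g t - γ * f t) :=
        mul_le_mul_of_nonneg_left hRt hppos.le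
      have h3 : (1 / (2 * t)) * ((2 * (M + (Bg + |γ| * Bf)) + 2) * t)
          = M + (Bg + |γ| * Bf) + 1 := by
        have htne : t ≠ 0 := ne_of_gt htpos
        field_simp
      linarith
    have hple2 : (0:ℝ) ≤ 1 - 1 / (2 * t) := by linarith
    have step1 : (1 - 1 / (2 * t)) * (-(Bg + |γ| * Bf))
        ≤ (1 - 1 / (2 * t)) * (g s - γ * f s) :=
      mul_le_mul_of_nonneg_left hmid hple2
    have step2 : -(Bg + |γ| * Bf) ≤ (1 - 1 / (2 * t)) * (-(Bg + |γ| * Bf)) := by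
      have h0 : (1 - 1 / (2 * t)) * (-(Bg + |γ| * Bf)) - (-(Bg + |γ| * Bf))
          = (1 / (2 * t)) * (Bg + |γ| * Bf) := by ring
      have h1' := mul_nonneg hppos.le hBnn
      linarith
    linarith only [h1, step1, step2]
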